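/- Let (x₀,y₀) ∈ ℝ² be a point where σ(x₀,y₀) ≠ 0, and let û : ℝ² → ℝ be twice continuously differentiable on a neighborhood of θ(x₀,y₀). Set u = û ∘ θ. Then at the point (x₀,y₀) one has the identity f₁·∂²u/∂x² + f₂·∂²u/∂x∂y + f₃·∂²u/∂y² + f₄·∂u/∂x + f₅·∂u/∂y = −(∂²û/∂x̂² + ∂²û/∂ŷ²)(θ(x₀,y₀)), i.e., the second-order operator L with coefficients f₁,…,f₅ applied to u reproduces minus the Laplacian of û evaluated at the image point. -/

import Mathlib

/-- Partial derivative with respect to the first variable. -/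
noncomputable def pdx (f : ℝ × ℝ → ℝ) (p : ℝ × ℝ) : ℝ :=
  deriv (fun s => f (s, p.2)) p.1

/-- Partial derivative with respect to the second variable. -/
noncomputable def pdy (f : ℝ × ℝ → ℝ) (p : ℝ × ℝ) : ℝ :=
  deriv (fun s => f (p.1, s)) p.2

/-- First component of the bilinear map θ. -/
noncomputable def theta1 (α γ : ℝ) (p : ℝ × ℝ) : ℝ :=
  p.1 + α * p.2 + (γ - 1 - α) * p.1 * p.2

/-- Second component of the bilinear map θ. -/
noncomputable def theta2 (β δ : ℝ) (p : ℝ × ℝ) : ℝ :=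
  β * p.2 + (δ - β) * p.1 * p.2

/-- The bilinear map θ. -/
noncomputable def theta (α β γ δ : ℝ) (p : ℝ × ℝ) : ℝ × ℝ :=
  (theta1 α γ p, theta2 β δ p)

/-- Jacobian determinant of θ. -/
noncomputable def sigma (α β γ δ : ℝ) (p : ℝ × ℝ) : ℝ :=
  pdx (theta1 α γ) p * pdy (theta2 β δ) p - pdy (theta1 α γ) p * pdx (theta2 β δ) p

/-- Coefficient f₁ of the transformed operator L. -/
noncomputable def f1 (α β γ δ : ℝ) (p : ℝ × ℝ) : ℝ :=
  -(((pdy (theta1 α γ) p) ^ 2 + (pdy (theta2 β δ) p) ^ 2) / (sigma α β γ δ p) ^ 2)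

/-- Coefficient f₂ of the transformed operator L. -/
noncomputable def f2 (α β γ δ : ℝ) (p : ℝ × ℝ) : ℝ :=
  2 * ((pdx (theta1 α γ) p * pdy (theta1 α γ) p +
    pdx (theta2 β δ) p * pdy (theta2 β δ) p) / (sigma α β γ δ p) ^ 2)

/-- Coefficient f₃ of the transformed operator L. -/
noncomputable def f3 (α β γ δ : ℝ) (p : ℝ × ℝ) : ℝ :=
  -(((pdx (theta1 α γ) p) ^ 2 + (pdx (theta2 β δ) p) ^ 2) / (sigma α β γ δ p) ^ 2)

/-- Coefficient f₄ of the transformed operator L; here ∂²θ₂/∂x∂y = δ−β and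
∂²θ₁/∂x∂y = γ−1−α are constants. -/
noncomputable def f4 (α β γ δ : ℝ) (p : ℝ × ℝ) : ℝ :=
  (f2 α β γ δ p / sigma α β γ δ p) *
    (pdy (theta1 α γ) p * (δ - β) - pdy (theta2 β δ) p * (γ - 1 - α))

/-- Coefficient f₅ of the transformed operator L. -/
noncomputable def f5 (α β γ δ : ℝ) (p : ℝ × ℝ) : ℝ :=
  (f2 α β γ δ p / sigma α β γ δ p) *
    (pdx (theta2 β δ) p * (γ - 1 - α) - pdx (theta1 α γ) p * (δ - β))

open Topology Filter

/- Auxiliary lemmas -/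

lemma aux_hx1 (α γ y s : ℝ) :
    HasDerivAt (fun s => theta1 α γ (s, y)) (1 + (γ - 1 - α) * y) s := by
  have h : HasDerivAt (fun s : ℝ => s + α * y + (γ - 1 - α) * s * y)
      (1 + 0 + (γ - 1 - α) * 1 * y) s :=
    ((hasDerivAt_id s).add (hasDerivAt_const s (α * y))).add
      (((hasDerivAt_id s).const_mul (γ - 1 - α)).mul_const y)
  simpa [theta1] using h

lemma aux_hx2 (β δ y s : ℝ) :
    HasDerivAt (fun s => theta2 β δ (s, y)) ((δ - β) * y) s := by
  have h : HasDerivAt (fun s : ℝ => β * y + (δ - β) * s * y)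
      (0 + (δ - β) * 1 * y) s :=
    (hasDerivAt_const s (β * y)).add
      (((hasDerivAt_id s).const_mul (δ - β)).mul_const y)
  simpa [theta2] using h

lemma aux_hy1 (α γ x t : ℝ) :
    HasDerivAt (fun t => theta1 α γ (x, t)) (α + (γ - 1 - α) * x) t := by
  have h : HasDerivAt (fun t : ℝ => x + α * t + (γ - 1 - α) * x * t)
      (0 + α * 1 + (γ - 1 - α) * x * 1) t :=
    ((hasDerivAt_const t x).add ((hasDerivAt_id t).const_mul α)).add
      ((hasDerivAt_id t).const_mul ((γ - 1 - α) * x))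
  simpa [theta1, mul_assoc] using h

lemma aux_hy2 (β δ x t : ℝ) :
    HasDerivAt (fun t => theta2 β δ (x, t)) (β + (δ - β) * x) t := by
  have h : HasDerivAt (fun t : ℝ => β * t + (δ - β) * x * t)
      (β * 1 + (δ - β) * x * 1) t :=
    ((hasDerivAt_id t).const_mul β).add ((hasDerivAt_id t).const_mul ((δ - β) * x))
  simpa [theta2, mul_assoc] using h

lemma aux_theta_slice_x (α β γ δ y s : ℝ) :
    HasDerivAt (fun s => theta α β γ δ (s, y))
      ((1 + (γ - 1 - α) * y, (δ - β) * y) : ℝ × ℝ) s :=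
  (aux_hx1 α γ y s).prodMk (aux_hx2 β δ y s)

lemma aux_theta_slice_y (α β γ δ x t : ℝ) :
    HasDerivAt (fun t => theta α β γ δ (x, t))
      ((α + (γ - 1 - α) * x, β + (δ - β) * x) : ℝ × ℝ) t :=
  (aux_hy1 α γ x t).prodMk (aux_hy2 β δ x t)

lemma aux_lin_expand (L : (ℝ × ℝ) →L[ℝ] ℝ) (a : ℝ × ℝ) :
    L a = a.1 * L (1, 0) + a.2 * L (0, 1) := by
  have ha : a = a.1 • ((1 : ℝ), (0 : ℝ)) + a.2 • ((0 : ℝ), (1 : ℝ)) := by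
    ext <;> simp
  conv_lhs => rw [ha]
  rw [map_add, map_smul, map_smul]
  simp [smul_eq_mul]

lemma aux_bilin_expand (B : (ℝ × ℝ) →L[ℝ] ((ℝ × ℝ) →L[ℝ] ℝ)) (a b : ℝ × ℝ) :
    B a b = a.1 * b.1 * B (1, 0) (1, 0) + a.1 * b.2 * B (1, 0) (0, 1)
      + a.2 * b.1 * B (0, 1) (1, 0) + a.2 * b.2 * B (0, 1) (0, 1) := by
  have ha : a = a.1 • ((1 : ℝ), (0 : ℝ)) + a.2 • ((0 : ℝ), (1 : ℝ)) := by
    ext <;> simp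
  have hb : b = b.1 • ((1 : ℝ), (0 : ℝ)) + b.2 • ((0 : ℝ), (1 : ℝ)) := by
    ext <;> simp
  conv_lhs => rw [ha, hb]
  simp only [map_add, map_smul, ContinuousLinearMap.add_apply, ContinuousLinearMap.coe_smul',
    Pi.smul_apply, smul_eq_mul]
  ring

lemma aux_algebra (P Q R T c d B11 B12 B22 g h : ℝ) (hS : P * T - R * Q ≠ 0) :
    -((R ^ 2 + T ^ 2) / (P * T - R * Q) ^ 2) *
        (P * P * B11 + P * Q * B12 + Q * P * B12 + Q * Q * B22) +
      2 * ((P * R + Q * T) / (P * T - R * Q) ^ 2) *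
        (P * R * B11 + P * T * B12 + Q * R * B12 + Q * T * B22 + (c * g + d * h)) +
      -((P ^ 2 + Q ^ 2) / (P * T - R * Q) ^ 2) *
        (R * R * B11 + R * T * B12 + T * R * B12 + T * T * B22) +
      2 * ((P * R + Q * T) / (P * T - R * Q) ^ 2) / (P * T - R * Q) * (R * d - T * c) *
        (P * g + Q * h) +
      2 * ((P * R + Q * T) / (P * T - R * Q) ^ 2) / (P * T - R * Q) * (Q * c - P * d) *
        (R * g + T * h) = -(B11 + B22) := by
  generalize hS' : P * T - R * Q = S at hS ⊢
  field_simp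
  subst hS'
  ring

set_option maxHeartbeats 1000000 in
theorem stmt_4 (α β γ δ : ℝ) (p₀ : ℝ × ℝ)
    (hσ : sigma α β γ δ p₀ ≠ 0)
    (uhat : ℝ × ℝ → ℝ) (huhat : ContDiffAt ℝ 2 uhat (theta α β γ δ p₀)) :
    f1 α β γ δ p₀ * pdx (pdx (fun p => uhat (theta α β γ δ p))) p₀ +
    f2 α β γ δ p₀ * pdx (pdy (fun p => uhat (theta α β γ δ p))) p₀ +
    f3 α β γ δ p₀ * pdy (pdy (fun p => uhat (theta α β γ δ p))) p₀ +
    f4 α β γ δ p₀ * pdx (fun p => uhat (theta α β γ δ p)) p₀ +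
    f5 α β γ δ p₀ * pdy (fun p => uhat (theta α β γ δ p)) p₀ =
      -(pdx (pdx uhat) (theta α β γ δ p₀) + pdy (pdy uhat) (theta α β γ δ p₀)) := by
  obtain ⟨x₀, y₀⟩ := p₀
  set u : ℝ × ℝ → ℝ := fun p => uhat (theta α β γ δ p) with hu
  set q₀ : ℝ × ℝ := theta α β γ δ (x₀, y₀) with hq₀
  set B : (ℝ × ℝ) →L[ℝ] ((ℝ × ℝ) →L[ℝ] ℝ) := fderiv ℝ (fderiv ℝ uhat) q₀ with hB
  -- continuity of θ
  have hθc : Continuous (theta α β γ δ) := by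
    unfold theta theta1 theta2; fun_prop
  -- eventual differentiability of uhat near q₀
  have hev : ∀ᶠ q in 𝓝 q₀, DifferentiableAt ℝ uhat q :=
    (huhat.eventually (by norm_num)).mono fun q hq => hq.differentiableAt two_ne_zero
  have hevp : ∀ᶠ p in 𝓝 ((x₀, y₀) : ℝ × ℝ), DifferentiableAt ℝ uhat (theta α β γ δ p) :=
    (hθc.tendsto (x₀, y₀)).eventually hev
  -- second fderiv exists
  have hD : HasFDerivAt (fderiv ℝ uhat) B q₀ :=
    ((huhat.fderiv_right (m := 1) (by norm_num)).differentiableAt one_ne_zero).hasFDerivAt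
  -- first derivative formulas for u
  have key1 : ∀ x y : ℝ, DifferentiableAt ℝ uhat (theta α β γ δ (x, y)) →
      pdx u (x, y) = fderiv ℝ uhat (theta α β γ δ (x, y))
        (1 + (γ - 1 - α) * y, (δ - β) * y) := fun x y hd =>
    (hd.hasFDerivAt.comp_hasDerivAt x (aux_theta_slice_x α β γ δ y x)).deriv
  have key2 : ∀ x y : ℝ, DifferentiableAt ℝ uhat (theta α β γ δ (x, y)) →
      pdy u (x, y) = fderiv ℝ uhat (theta α β γ δ (x, y))
        (α + (γ - 1 - α) * x, β + (δ - β) * x) := fun x y hd =>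
    (hd.hasFDerivAt.comp_hasDerivAt y (aux_theta_slice_y α β γ δ x y)).deriv
  -- first derivative formulas for uhat
  have keyRx : ∀ q : ℝ × ℝ, DifferentiableAt ℝ uhat q →
      pdx uhat q = fderiv ℝ uhat q (1, 0) := fun q hd =>
    (hd.hasFDerivAt.comp_hasDerivAt q.1
      ((hasDerivAt_id q.1).prodMk (hasDerivAt_const q.1 q.2))).deriv
  have keyRy : ∀ q : ℝ × ℝ, DifferentiableAt ℝ uhat q →
      pdy uhat q = fderiv ℝ uhat q (0, 1) := fun q hd =>
    (hd.hasFDerivAt.comp_hasDerivAt q.2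
      ((hasDerivAt_const q.2 q.1).prodMk (hasDerivAt_id q.2))).deriv
  -- slice tendsto facts
  have hsltx : Filter.Tendsto (fun s : ℝ => ((s, y₀) : ℝ × ℝ)) (𝓝 x₀) (𝓝 (x₀, y₀)) :=
    (continuous_id.prodMk continuous_const).tendsto' x₀ _ rfl
  have hslty : Filter.Tendsto (fun t : ℝ => ((x₀, t) : ℝ × ℝ)) (𝓝 y₀) (𝓝 (x₀, y₀)) :=
    (continuous_const.prodMk continuous_id).tendsto' y₀ _ rfl
  -- second derivative: pdx pdx u
  have exx : (fun s => pdx u (s, y₀)) =ᶠ[𝓝 x₀]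
      fun s => fderiv ℝ uhat (theta α β γ δ (s, y₀))
        (1 + (γ - 1 - α) * y₀, (δ - β) * y₀) := by
    filter_upwards [hsltx.eventually hevp] with s hs
    exact key1 s y₀ hs
  have hBxx : HasDerivAt (fun s => fderiv ℝ uhat (theta α β γ δ (s, y₀))
      (1 + (γ - 1 - α) * y₀, (δ - β) * y₀))
      (B (1 + (γ - 1 - α) * y₀, (δ - β) * y₀)
        (1 + (γ - 1 - α) * y₀, (δ - β) * y₀)) x₀ := by
    have h1 : HasDerivAt (fun s => fderiv ℝ uhat (theta α β γ δ (s, y₀)))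
        (B (1 + (γ - 1 - α) * y₀, (δ - β) * y₀)) x₀ :=
      hD.comp_hasDerivAt x₀ (aux_theta_slice_x α β γ δ y₀ x₀)
    simpa using h1.clm_apply
      (hasDerivAt_const x₀ ((1 + (γ - 1 - α) * y₀, (δ - β) * y₀) : ℝ × ℝ))
  have huxx : pdx (pdx u) (x₀, y₀) = B (1 + (γ - 1 - α) * y₀, (δ - β) * y₀)
      (1 + (γ - 1 - α) * y₀, (δ - β) * y₀) := by
    show deriv (fun s => pdx u (s, y₀)) x₀ = _
    rw [exx.deriv_eq]; exact hBxx.deriv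
  -- second derivative: pdx pdy u
  have exy : (fun s => pdy u (s, y₀)) =ᶠ[𝓝 x₀]
      fun s => fderiv ℝ uhat (theta α β γ δ (s, y₀))
        (α + (γ - 1 - α) * s, β + (δ - β) * s) := by
    filter_upwards [hsltx.eventually hevp] with s hs
    exact key2 s y₀ hs
  have hvec : HasDerivAt (fun s : ℝ => ((α + (γ - 1 - α) * s, β + (δ - β) * s) : ℝ × ℝ))
      ((γ - 1 - α, δ - β) : ℝ × ℝ) x₀ := by
    have h1 : HasDerivAt (fun s : ℝ => α + (γ - 1 - α) * s) (0 + (γ - 1 - α) * 1) x₀ :=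
      (hasDerivAt_const x₀ α).add ((hasDerivAt_id x₀).const_mul (γ - 1 - α))
    have h2 : HasDerivAt (fun s : ℝ => β + (δ - β) * s) (0 + (δ - β) * 1) x₀ :=
      (hasDerivAt_const x₀ β).add ((hasDerivAt_id x₀).const_mul (δ - β))
    simpa using h1.prodMk h2
  have hBxy : HasDerivAt (fun s => fderiv ℝ uhat (theta α β γ δ (s, y₀))
      (α + (γ - 1 - α) * s, β + (δ - β) * s))
      (B (1 + (γ - 1 - α) * y₀, (δ - β) * y₀) (α + (γ - 1 - α) * x₀, β + (δ - β) * x₀)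
        + fderiv ℝ uhat q₀ (γ - 1 - α, δ - β)) x₀ := by
    have h1 : HasDerivAt (fun s => fderiv ℝ uhat (theta α β γ δ (s, y₀)))
        (B (1 + (γ - 1 - α) * y₀, (δ - β) * y₀)) x₀ :=
      hD.comp_hasDerivAt x₀ (aux_theta_slice_x α β γ δ y₀ x₀)
    exact h1.clm_apply hvec
  have huxy : pdx (pdy u) (x₀, y₀) =
      B (1 + (γ - 1 - α) * y₀, (δ - β) * y₀) (α + (γ - 1 - α) * x₀, β + (δ - β) * x₀)
        + fderiv ℝ uhat q₀ (γ - 1 - α, δ - β) := by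
    show deriv (fun s => pdy u (s, y₀)) x₀ = _
    rw [exy.deriv_eq]; exact hBxy.deriv
  -- second derivative: pdy pdy u
  have eyy : (fun t => pdy u (x₀, t)) =ᶠ[𝓝 y₀]
      fun t => fderiv ℝ uhat (theta α β γ δ (x₀, t))
        (α + (γ - 1 - α) * x₀, β + (δ - β) * x₀) := by
    filter_upwards [hslty.eventually hevp] with t ht
    exact key2 x₀ t ht
  have hByy : HasDerivAt (fun t => fderiv ℝ uhat (theta α β γ δ (x₀, t))
      (α + (γ - 1 - α) * x₀, β + (δ - β) * x₀))
      (B (α + (γ - 1 - α) * x₀, β + (δ - β) * x₀)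
        (α + (γ - 1 - α) * x₀, β + (δ - β) * x₀)) y₀ := by
    have h1 : HasDerivAt (fun t => fderiv ℝ uhat (theta α β γ δ (x₀, t)))
        (B (α + (γ - 1 - α) * x₀, β + (δ - β) * x₀)) y₀ :=
      hD.comp_hasDerivAt y₀ (aux_theta_slice_y α β γ δ x₀ y₀)
    simpa using h1.clm_apply
      (hasDerivAt_const y₀ ((α + (γ - 1 - α) * x₀, β + (δ - β) * x₀) : ℝ × ℝ))
  have huyy : pdy (pdy u) (x₀, y₀) = B (α + (γ - 1 - α) * x₀, β + (δ - β) * x₀)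
      (α + (γ - 1 - α) * x₀, β + (δ - β) * x₀) := by
    show deriv (fun t => pdy u (x₀, t)) y₀ = _
    rw [eyy.deriv_eq]; exact hByy.deriv
  -- RHS second derivatives of uhat at q₀
  have hsltRx : Filter.Tendsto (fun s : ℝ => ((s, q₀.2) : ℝ × ℝ)) (𝓝 q₀.1) (𝓝 q₀) :=
    (continuous_id.prodMk continuous_const).tendsto' q₀.1 _ rfl
  have hsltRy : Filter.Tendsto (fun t : ℝ => ((q₀.1, t) : ℝ × ℝ)) (𝓝 q₀.2) (𝓝 q₀) :=
    (continuous_const.prodMk continuous_id).tendsto' q₀.2 _ rfl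
  have eRx : (fun s => pdx uhat (s, q₀.2)) =ᶠ[𝓝 q₀.1]
      fun s => fderiv ℝ uhat (s, q₀.2) ((1 : ℝ), (0 : ℝ)) := by
    filter_upwards [hsltRx.eventually hev] with s hs
    exact keyRx (s, q₀.2) hs
  have eRy : (fun t => pdy uhat (q₀.1, t)) =ᶠ[𝓝 q₀.2]
      fun t => fderiv ℝ uhat (q₀.1, t) ((0 : ℝ), (1 : ℝ)) := by
    filter_upwards [hsltRy.eventually hev] with t ht
    exact keyRy (q₀.1, t) ht
  have hRxx : pdx (pdx uhat) q₀ = B (1, 0) (1, 0) := by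
    show deriv (fun s => pdx uhat (s, q₀.2)) q₀.1 = _
    rw [eRx.deriv_eq]
    have h1 : HasDerivAt (fun s => fderiv ℝ uhat ((s, q₀.2) : ℝ × ℝ))
        (B (1, 0)) q₀.1 :=
      hD.comp_hasDerivAt q₀.1 ((hasDerivAt_id q₀.1).prodMk (hasDerivAt_const q₀.1 q₀.2))
    have := h1.clm_apply (hasDerivAt_const q₀.1 (((1 : ℝ), (0 : ℝ)) : ℝ × ℝ))
    simpa using this.deriv
  have hRyy : pdy (pdy uhat) q₀ = B (0, 1) (0, 1) := by
    show deriv (fun t => pdy uhat (q₀.1, t)) q₀.2 = _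
    rw [eRy.deriv_eq]
    have h1 : HasDerivAt (fun t => fderiv ℝ uhat ((q₀.1, t) : ℝ × ℝ))
        (B (0, 1)) q₀.2 :=
      hD.comp_hasDerivAt q₀.2 ((hasDerivAt_const q₀.2 q₀.1).prodMk (hasDerivAt_id q₀.2))
    have := h1.clm_apply (hasDerivAt_const q₀.2 (((0 : ℝ), (1 : ℝ)) : ℝ × ℝ))
    simpa using this.deriv
  -- symmetry of the second derivative
  have hsym : B (1, 0) (0, 1) = B (0, 1) (1, 0) :=
    second_derivative_symmetric_of_eventually
      (hev.mono fun q hq => hq.hasFDerivAt) hD _ _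
  -- first derivatives at the base point
  have hdq₀ : DifferentiableAt ℝ uhat q₀ := huhat.differentiableAt two_ne_zero
  have hux : pdx u (x₀, y₀) = fderiv ℝ uhat q₀
      (1 + (γ - 1 - α) * y₀, (δ - β) * y₀) := key1 x₀ y₀ hdq₀
  have huy : pdy u (x₀, y₀) = fderiv ℝ uhat q₀
      (α + (γ - 1 - α) * x₀, β + (δ - β) * x₀) := key2 x₀ y₀ hdq₀
  -- partial derivatives of theta components at the base point
  have ht1x : pdx (theta1 α γ) (x₀, y₀) = 1 + (γ - 1 - α) * y₀ := (aux_hx1 α γ y₀ x₀).deriv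
  have ht2x : pdx (theta2 β δ) (x₀, y₀) = (δ - β) * y₀ := (aux_hx2 β δ y₀ x₀).deriv
  have ht1y : pdy (theta1 α γ) (x₀, y₀) = α + (γ - 1 - α) * x₀ := (aux_hy1 α γ x₀ y₀).deriv
  have ht2y : pdy (theta2 β δ) (x₀, y₀) = β + (δ - β) * x₀ := (aux_hy2 β δ x₀ y₀).deriv
  -- nonvanishing of the Jacobian, in explicit form
  simp only [sigma, ht1x, ht2x, ht1y, ht2y] at hσ
  -- rewrite everything
  rw [huxx, huxy, huyy, hux, huy, hRxx, hRyy]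
  simp only [f1, f2, f3, f4, f5, sigma, ht1x, ht2x, ht1y, ht2y]
  rw [aux_bilin_expand B (1 + (γ - 1 - α) * y₀, (δ - β) * y₀)
      (1 + (γ - 1 - α) * y₀, (δ - β) * y₀),
    aux_bilin_expand B (1 + (γ - 1 - α) * y₀, (δ - β) * y₀)
      (α + (γ - 1 - α) * x₀, β + (δ - β) * x₀),
    aux_bilin_expand B (α + (γ - 1 - α) * x₀, β + (δ - β) * x₀)
      (α + (γ - 1 - α) * x₀, β + (δ - β) * x₀),
    aux_lin_expand (fderiv ℝ uhat q₀) (γ - 1 - α, δ - β),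
    aux_lin_expand (fderiv ℝ uhat q₀) (1 + (γ - 1 - α) * y₀, (δ - β) * y₀),
    aux_lin_expand (fderiv ℝ uhat q₀) (α + (γ - 1 - α) * x₀, β + (δ - β) * x₀),
    hsym]
  simp only [Prod.fst, Prod.snd]
  linear_combination aux_algebra (1 + (γ - 1 - α) * y₀) ((δ - β) * y₀)
    (α + (γ - 1 - α) * x₀) (β + (δ - β) * x₀) (γ - 1 - α) (δ - β)
    (B (1, 0) (1, 0)) (B (0, 1) (1, 0)) (B (0, 1) (0, 1))
    (fderiv ℝ uhat q₀ (1, 0)) (fderiv ℝ uhat q₀ (0, 1)) hσ
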